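/- For a Tychonoff space X, if lc(X) is G_δ-dense in X, then the space C_kh(X) with the bi-compact-open topology is completely regular. -/

import Mathlib

open Set TopologicalSpace Filter

/-- The open-point topology on `C(X, ℝ)`, generated by the sets
`[U, r]⁻ = {f | ∃ x ∈ U, f x = r}` for `U` open in `X` and `r : ℝ`. -/
def openPointTop (X : Type*) [TopologicalSpace X] : TopologicalSpace C(X, ℝ) :=
  generateFrom {S | ∃ (U : Set X) (r : ℝ), IsOpen U ∧ S = {f : C(X, ℝ) | ∃ x ∈ U, f x = r}}

/-- The point-open topology (topology of pointwise convergence) on `C(X, ℝ)`. -/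
def pointOpenTop (X : Type*) [TopologicalSpace X] : TopologicalSpace C(X, ℝ) :=
  generateFrom {S | ∃ (x : X) (V : Set ℝ), IsOpen V ∧ S = {f : C(X, ℝ) | f x ∈ V}}

/-- The bi-compact-open topology `kh`: the join (coarsest common refinement) of the
compact-open topology and the open-point topology.  In Mathlib's order on
`TopologicalSpace` (where smaller = finer), this join is `⊓`. -/
def biCompactOpenTop (X : Type*) [TopologicalSpace X] : TopologicalSpace C(X, ℝ) :=
  ContinuousMap.compactOpen ⊓ openPointTop X

/-- The bi-point-open topology `ph`: the join of the point-open topology and the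
open-point topology. -/
def biPointOpenTop (X : Type*) [TopologicalSpace X] : TopologicalSpace C(X, ℝ) :=
  pointOpenTop X ⊓ openPointTop X

/-- `lc X` is the set of points of `X` having a compact neighborhood. -/
def lcSet (X : Type*) [TopologicalSpace X] : Set X :=
  {x | ∃ K : Set X, IsCompact K ∧ K ∈ nhds x}

/-- A set `A` is `Gδ`-dense if every nonempty `Gδ`-set meets it. -/
def GdeltaDense {X : Type*} [TopologicalSpace X] (A : Set X) : Prop :=
  ∀ G : Set X, IsGδ G → G.Nonempty → (G ∩ A).Nonempty

/-- A nonempty set `B` is an `R`-set if countably many continuous real functions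
map it onto all of `ℝ`. -/
def IsRSet {X : Type*} [TopologicalSpace X] (B : Set X) : Prop :=
  B.Nonempty ∧ ∃ f : ℕ → C(X, ℝ), (⋃ n, (f n) '' B) = Set.univ

/-- `X` is `R`-separable if there is a countable collection of `R`-sets such that
every nonempty open set contains a member of the collection. -/
def RSeparable (X : Type*) [TopologicalSpace X] : Prop :=
  ∃ S : ℕ → Set X, (∀ n, IsRSet (S n)) ∧
    ∀ U : Set X, IsOpen U → U.Nonempty → ∃ n, S n ⊆ U

/-- A topology is submetrizable if it is finer than some metrizable topology. -/
def Submetrizable (α : Type*) [t : TopologicalSpace α] : Prop :=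
  ∃ t' : TopologicalSpace α, @MetrizableSpace α t' ∧ t ≤ t'

/-- `X` is hemicompact if there is a sequence of compact sets cofinal in the
compact subsets of `X`. -/
def Hemicompact (X : Type*) [TopologicalSpace X] : Prop :=
  ∃ K : ℕ → Set X, (∀ n, IsCompact (K n)) ∧ ∀ A : Set X, IsCompact A → ∃ n, A ⊆ K n

/-- `X` is almost σ-compact if it has a dense σ-compact subset. -/
def AlmostSigmaCompact (X : Type*) [TopologicalSpace X] : Prop :=
  ∃ K : ℕ → Set X, (∀ n, IsCompact (K n)) ∧ Dense (⋃ n, K n)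
open Topology in
/-- Preimage of a Gδ set under a continuous map is Gδ. -/
lemma isGdelta_preimage {X Y : Type*} [TopologicalSpace X] [TopologicalSpace Y] {f : X → Y}
    (hf : Continuous f) {s : Set Y} (hs : IsGδ s) : IsGδ (f ⁻¹' s) := by
  obtain ⟨T, hT, hTc, rfl⟩ := hs
  rw [preimage_sInter]
  exact IsGδ.biInter hTc fun t ht => ((hT t ht).preimage hf).isGδ

open Topology in
lemma cont_mono_dom {α β : Type*} {t₁ t₂ : TopologicalSpace α} [tβ : TopologicalSpace β]
    {f : α → β} (h : Continuous[t₂, tβ] f) (hle : t₁ ≤ t₂) : Continuous[t₁, tβ] f :=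
  continuous_iff_le_induced.mpr (hle.trans (continuous_iff_le_induced.mp h))

open Topology in
/-- The topology induced by a family of real-valued functions is completely regular. -/
lemma crs_of_iInf_induced {α : Type*} {ι : Type*} (φ : ι → α → ℝ) :
    @CompletelyRegularSpace α (⨅ i, TopologicalSpace.induced (φ i) inferInstance) := by
  letI t : TopologicalSpace α := ⨅ i, TopologicalSpace.induced (φ i) inferInstance
  constructor
  intro x K hK hxK
  have hmem : Kᶜ ∈ @nhds α t x := hK.isOpen_compl.mem_nhds hxK
  rw [show t = ⨅ i, TopologicalSpace.induced (φ i) inferInstance from rfl,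
    _root_.nhds_iInf] at hmem
  simp only [nhds_induced] at hmem
  rw [Filter.mem_iInf] at hmem
  obtain ⟨Idx, Ifin, V, hV, hVeq⟩ := hmem
  choose W hW hWsub using fun i : Idx => Filter.mem_comap.mp (hV i)
  choose O hOsub hOopen hOmem using fun i : Idx => mem_nhds_iff.mp (hW i)
  have hbump : ∀ i : Idx, ∃ h : ℝ → unitInterval,
      Continuous h ∧ h (φ i x) = 0 ∧ EqOn h 1 (O i)ᶜ := fun i =>
    CompletelyRegularSpace.completely_regular _ _ (hOopen i).isClosed_compl
      (by simp [hOmem i])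
  choose h hhc hh0 hh1 using hbump
  haveI : Fintype Idx := Ifin.fintype
  have hφc : ∀ i : Idx, Continuous[t, _] (φ i) :=
    fun i => continuous_iff_le_induced.mpr (iInf_le _ (i : ι))
  have hFc : Continuous[t, _] (fun a => ∑ i : Idx, (h i (φ (i : ι) a) : ℝ)) := by
    apply continuous_finset_sum
    intro i _
    exact (continuous_subtype_val.comp (hhc i)).comp (hφc i)
  refine ⟨fun a => Set.projIcc 0 1 zero_le_one (∑ i : Idx, (h i (φ (i : ι) a) : ℝ)), ?_, ?_, ?_⟩
  · exact continuous_projIcc.comp hFc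
  · have h0 : (∑ i : Idx, (h i (φ (i : ι) x) : ℝ)) = 0 := by
      apply Finset.sum_eq_zero
      intro i _
      simp [hh0 i]
    dsimp only
    rw [h0, Set.projIcc_of_le_left _ le_rfl]
    rfl
  · intro a ha
    have : a ∉ ⋂ i : Idx, V i := by
      rw [← hVeq]
      simpa using ha
    obtain ⟨i, hi⟩ : ∃ i : Idx, a ∉ V i := by
      by_contra hc
      push_neg at hc
      exact this (Set.mem_iInter.mpr hc)
    have hφa : φ i a ∈ (O i)ᶜ := by
      intro hmem
      exact hi (hWsub i (hOsub i hmem))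
    have h1 : (1 : ℝ) ≤ ∑ j : Idx, (h j (φ (j : ι) a) : ℝ) := by
      have := hh1 i hφa
      calc (1 : ℝ) = (h i (φ (i : ι) a) : ℝ) := by rw [this]; rfl
        _ ≤ ∑ j : Idx, (h j (φ (j : ι) a) : ℝ) :=
          Finset.single_le_sum (fun j _ => (h j (φ (j : ι) a)).2.1) (Finset.mem_univ i)
    dsimp only
    rw [Set.projIcc_of_right_le _ h1]
    rfl

/-- The family of real functions continuous for the bi-compact-open topology. -/
def khFuncs (X : Type*) [TopologicalSpace X] : Type _ :=
  {ψ : C(X, ℝ) → ℝ // @Continuous _ _ (biCompactOpenTop X) inferInstance ψ}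

/-- The weak topology induced by all `kh`-continuous real functions. -/
def khWeak (X : Type*) [TopologicalSpace X] : TopologicalSpace C(X, ℝ) :=
  ⨅ i : khFuncs X, TopologicalSpace.induced i.1 inferInstance

open Topology in
lemma continuous_real_of_Ioi_Iio {α : Type*} {tα : TopologicalSpace α} {φ : α → ℝ}
    (h₁ : ∀ a : ℝ, IsOpen[tα] (φ ⁻¹' Ioi a)) (h₂ : ∀ a : ℝ, IsOpen[tα] (φ ⁻¹' Iio a)) :
    Continuous[tα, inferInstance] φ := by
  rw [OrderTopology.topology_eq_generate_intervals (α := ℝ), continuous_generateFrom_iff]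
  rintro s ⟨a, rfl | rfl⟩
  exacts [h₁ a, h₂ a]

open Topology in
/-- Separation of a point from the complement of a compact-open subbasic set. -/
lemma exists_sep_co {X : Type*} [TopologicalSpace X] {K : Set X} {V : Set ℝ}
    (hK : IsCompact K) (hV : IsOpen V) {f : C(X, ℝ)} (hf : MapsTo f K V) :
    ∃ (ψ : C(X, ℝ) → ℝ) (ε : ℝ), Continuous ψ ∧ 0 < ε ∧ f ∈ ψ ⁻¹' Iio ε ∧
      ψ ⁻¹' Iio ε ⊆ {g : C(X, ℝ) | MapsTo g K V} := by
  rcases K.eq_empty_or_nonempty with rfl | hKne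
  · exact ⟨fun _ => 0, 1, continuous_const, one_pos, by simp,
      fun g _ => mapsTo_empty _ _⟩
  rcases Vᶜ.eq_empty_or_nonempty with hVc | hVc
  · have hVu : V = univ := by simpa [compl_empty_iff] using hVc
    subst hVu
    exact ⟨fun _ => 0, 1, continuous_const, one_pos, by simp, fun g _ z _ => mem_univ _⟩
  haveI : CompactSpace ↥K := isCompact_iff_compactSpace.mp hK
  obtain ⟨z₀, hz₀K, hz₀min⟩ := hK.exists_isMinOn hKne
    (((Metric.continuous_infDist_pt Vᶜ).comp f.continuous).continuousOn)
  set ε := Metric.infDist (f z₀) Vᶜ with hε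
  have hεpos : 0 < ε :=
    (hV.isClosed_compl.notMem_iff_infDist_pos hVc).mp (by simp [hf hz₀K])
  refine ⟨fun g => dist (g.restrict K) (f.restrict K), ε,
    (ContinuousMap.continuous_restrict K).dist continuous_const, hεpos, by simp [hεpos], ?_⟩
  rintro g hg z hz
  have h1 : dist (g z) (f z) < ε := by
    have := ContinuousMap.dist_apply_le_dist (f := g.restrict K) (g := f.restrict K) ⟨z, hz⟩
    exact lt_of_le_of_lt this hg
  by_contra hgz
  have h2 : Metric.infDist (f z) Vᶜ ≤ dist (f z) (g z) := Metric.infDist_le_dist_of_mem hgz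
  have h3 : ε ≤ Metric.infDist (f z) Vᶜ := hz₀min hz
  rw [dist_comm] at h1
  linarith

open Topology in
/-- Separation of a point from the complement of an open-point subbasic set,
using Gδ-density of the set of points with compact neighborhoods. -/
lemma exists_sep_op {X : Type*} [TopologicalSpace X] [T2Space X] [CompletelyRegularSpace X]
    (hlc : GdeltaDense (lcSet X)) {U : Set X} {r : ℝ} (hU : IsOpen U) {f : C(X, ℝ)}
    {x : X} (hxU : x ∈ U) (hfx : f x = r) :
    ∃ φ : C(X, ℝ) → ℝ, Continuous[biCompactOpenTop X, _] φ ∧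
      f ∈ φ ⁻¹' Ioi (1/2) ∧ φ ⁻¹' Ioi (1/2) ⊆ {g : C(X, ℝ) | ∃ z ∈ U, g z = r} := by
  have hle_co : biCompactOpenTop X ≤ ContinuousMap.compactOpen := inf_le_left
  have hle_op : biCompactOpenTop X ≤ openPointTop X := inf_le_right
  -- find a point of lc(X) in U where f takes value r
  have hGδ : IsGδ (U ∩ (⇑f) ⁻¹' {r}) :=
    hU.isGδ.inter (isGdelta_preimage f.continuous (IsGδ.singleton r))
  obtain ⟨y, ⟨⟨hyU, hyr⟩, N, hNc, hNn⟩⟩ := hlc _ hGδ ⟨x, hxU, hfx⟩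
  have hyr' : f y = r := hyr
  -- a compact neighborhood C of y inside U
  have hint : interior N ∩ U ∈ 𝓝 y :=
    Filter.inter_mem (isOpen_interior.mem_nhds (mem_interior_iff_mem_nhds.mpr hNn))
      (hU.mem_nhds hyU)
  obtain ⟨C, hCn, hCcl, hCsub⟩ := exists_mem_nhds_isClosed_subset hint
  have hCN : C ⊆ N := fun z hz => interior_subset (hCsub hz).1
  have hCU : C ⊆ U := fun z hz => (hCsub hz).2
  have hCcomp : IsCompact C := hNc.of_isClosed_subset hCcl hCN
  have hyC : y ∈ C := mem_of_mem_nhds hCn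
  have hyintC : y ∈ interior C := mem_interior_iff_mem_nhds.mpr hCn
  -- bump function on X supported in interior C
  obtain ⟨β, hβc, hβ0, hβ1⟩ := CompletelyRegularSpace.completely_regular y (interior C)ᶜ
    isOpen_interior.isClosed_compl (by simpa using hyintC)
  set b : X → ℝ := fun z => 1 - (β z : ℝ) with hb
  have hbc : Continuous b := continuous_const.sub (continuous_subtype_val.comp hβc)
  have hby : b y = 1 := by simp [hb, hβ0]
  have hbmem : ∀ z, 0 ≤ b z ∧ b z ≤ 1 := by
    intro z
    have h1 := (β z).2.1
    have h2 := (β z).2.2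
    constructor <;> simp [hb] <;> linarith
  have hbpos : ∀ z, 0 < b z → z ∈ interior C := by
    intro z hz
    by_contra hzc
    have h1 : β z = 1 := hβ1 hzc
    rw [hb] at hz
    simp only [h1] at hz
    norm_num at hz
  -- the separating function
  set φ : C(X, ℝ) → ℝ := fun g => sSup (b '' (C ∩ ⇑g ⁻¹' {r})) with hφ
  have hbdd : ∀ g : C(X, ℝ), BddAbove (b '' (C ∩ ⇑g ⁻¹' {r})) := by
    intro g
    refine ⟨1, ?_⟩
    rintro _ ⟨z, _, rfl⟩
    exact (hbmem z).2
  have hφ0 : ∀ g : C(X, ℝ), 0 ≤ φ g := by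
    intro g
    rcases (C ∩ ⇑g ⁻¹' {r}).eq_empty_or_nonempty with he | hne
    · simp [hφ, he, Real.sSup_empty]
    · apply Real.sSup_nonneg
      rintro _ ⟨z, _, rfl⟩
      exact (hbmem z).1
  have hφge : ∀ (g : C(X, ℝ)) z, z ∈ C → g z = r → b z ≤ φ g := by
    intro g z hzC hzr
    exact le_csSup (hbdd g) ⟨z, ⟨hzC, by simp [hzr]⟩, rfl⟩
  have hφgt : ∀ (g : C(X, ℝ)) (a : ℝ), 0 ≤ a → a < φ g →
      ∃ z, z ∈ C ∧ a < b z ∧ g z = r := by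
    intro g a ha hlt
    rcases (C ∩ ⇑g ⁻¹' {r}).eq_empty_or_nonempty with he | hne
    · rw [hφ] at hlt
      simp only [he, image_empty, Real.sSup_empty] at hlt
      linarith
    · obtain ⟨w, hw, haw⟩ := exists_lt_of_lt_csSup (hne.image b) hlt
      obtain ⟨z, hz, rfl⟩ := hw
      exact ⟨z, hz.1, haw, by simpa using hz.2⟩
  have hφlt : ∀ (g : C(X, ℝ)) (a : ℝ), 0 < a →
      (∀ z, z ∈ C → a ≤ b z → g z ≠ r) → φ g < a := by
    intro g a ha hno
    rcases (C ∩ ⇑g ⁻¹' {r}).eq_empty_or_nonempty with he | hne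
    · rw [hφ]
      simp only [he, image_empty, Real.sSup_empty]
      exact ha
    · have hScl : IsClosed (⇑g ⁻¹' {r}) := isClosed_singleton.preimage g.continuous
      have hScomp : IsCompact (C ∩ ⇑g ⁻¹' {r}) := hCcomp.inter_right hScl
      obtain ⟨z₀, hz₀, hmax⟩ := hScomp.exists_isMaxOn hne hbc.continuousOn
      have h1 : φ g ≤ b z₀ := by
        apply csSup_le (hne.image b)
        rintro _ ⟨w, hw, rfl⟩
        exact hmax hw
      have h2 : b z₀ < a := by
        by_contra hc
        push_neg at hc
        exact hno z₀ hz₀.1 hc (by simpa using hz₀.2)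
      linarith
  -- φ is continuous for the bi-compact-open topology
  have hφct : Continuous[biCompactOpenTop X, _] φ := by
    apply continuous_real_of_Ioi_Iio
    · intro a
      rcases lt_or_ge a 0 with ha | ha
      · have heq : φ ⁻¹' Ioi a = univ :=
          eq_univ_of_forall fun g => lt_of_lt_of_le ha (hφ0 g)
        rw [heq]; exact @isOpen_univ C(X, ℝ) (biCompactOpenTop X)
      · have heq : φ ⁻¹' Ioi a = {g : C(X, ℝ) | ∃ z ∈ b ⁻¹' Ioi a, g z = r} := by
          ext g
          constructor
          · intro hg
            obtain ⟨z, _, hz2, hz3⟩ := hφgt g a ha hg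
            exact ⟨z, hz2, hz3⟩
          · rintro ⟨z, hz1, hz2⟩
            have hzC : z ∈ C := interior_subset (hbpos z (lt_of_le_of_lt ha hz1))
            exact lt_of_lt_of_le hz1 (hφge g z hzC hz2)
        rw [heq]
        have hgen : IsOpen[openPointTop X] {g : C(X, ℝ) | ∃ z ∈ b ⁻¹' Ioi a, g z = r} :=
          isOpen_generateFrom_of_mem ⟨b ⁻¹' Ioi a, r, isOpen_Ioi.preimage hbc, rfl⟩
        exact hgen.mono hle_op
    · intro a
      rcases le_or_gt a 0 with ha | ha
      · have heq : φ ⁻¹' Iio a = ∅ := by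
          apply eq_empty_of_forall_notMem
          intro g hg
          exact absurd (lt_of_le_of_lt (hφ0 g) hg) (not_lt.mpr ha)
        rw [heq]; exact @isOpen_empty C(X, ℝ) (biCompactOpenTop X)
      · have heq : φ ⁻¹' Iio a = {g : C(X, ℝ) | MapsTo ⇑g (C ∩ b ⁻¹' Ici a) ({r}ᶜ)} := by
          ext g
          constructor
          · intro hg z hz hzr
            have h1 : b z ≤ φ g := hφge g z hz.1 (by simpa using hzr)
            have h2 : a ≤ φ g := le_trans hz.2 h1
            exact absurd hg (not_lt.mpr h2)
          · intro hg
            exact hφlt g a ha fun z hzC hzb hzr =>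
              hg ⟨hzC, hzb⟩ (by simpa using hzr)
        rw [heq]
        exact (ContinuousMap.isOpen_setOf_mapsTo
          (hCcomp.inter_right (isClosed_Ici.preimage hbc))
          isClosed_singleton.isOpen_compl).mono hle_co
  refine ⟨φ, hφct, ?_, ?_⟩
  · have h1 : (1 : ℝ) ≤ φ f := hby ▸ hφge f y hyC hyr'
    simp only [mem_preimage, mem_Ioi]
    linarith
  · intro g hg
    obtain ⟨z, hzC, hzb, hzr⟩ := hφgt g (1/2) (by norm_num) hg
    exact ⟨z, hCU hzC, hzr⟩

open Topology in
theorem stmt5 {X : Type*} [TopologicalSpace X] [T2Space X] [CompletelyRegularSpace X] (hlc : GdeltaDense (lcSet X)) :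
    @CompletelyRegularSpace C(X, ℝ) (biCompactOpenTop X) := by
  have hco : khWeak X ≤ (ContinuousMap.compactOpen : TopologicalSpace C(X, ℝ)) := by
    rw [ContinuousMap.compactOpen_eq]
    apply le_generateFrom
    rintro s ⟨K, hK, V, hV, rfl⟩
    simp only [Set.mem_setOf_eq] at hK hV
    dsimp only
    rw [@isOpen_iff_forall_mem_open _ (khWeak X)]
    intro f hf
    obtain ⟨ψ, ε, hcont, hεpos, hmem, hsub⟩ := exists_sep_co hK hV hf
    refine ⟨ψ ⁻¹' Iio ε, hsub, ?_, hmem⟩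
    exact (isOpen_induced isOpen_Iio).mono
      (iInf_le _ (⟨ψ, cont_mono_dom hcont inf_le_left⟩ : khFuncs X))
  have hop : khWeak X ≤ openPointTop X := by
    rw [openPointTop]
    apply le_generateFrom
    rintro s ⟨U, r, hU, rfl⟩
    rw [@isOpen_iff_forall_mem_open _ (khWeak X)]
    rintro f ⟨x, hxU, hfx⟩
    obtain ⟨φ, hφct, hmem, hsub⟩ := exists_sep_op hlc hU hxU hfx
    refine ⟨φ ⁻¹' Ioi (1/2), hsub, ?_, hmem⟩
    exact (isOpen_induced isOpen_Ioi).mono (iInf_le _ (⟨φ, hφct⟩ : khFuncs X))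
  have key : biCompactOpenTop X = khWeak X := by
    apply le_antisymm
    · exact le_iInf fun i => continuous_iff_le_induced.mp i.2
    · exact le_inf hco hop
  rw [key]
  exact crs_of_iInf_induced fun i : khFuncs X => i.1
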